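/- arXiv:2605.10520 — 4 statements merged into one kernel-verified Lean document; each statement's English description precedes it below -/
import Mathlib

section
/- Let H ∈ SL(3,ℝ), y ∈ S², and let v₁, v₂ ∈ ℝ³ be orthonormal vectors with ⟨v₁, y⟩ = ⟨v₂, y⟩ = 0. Set w := H⁻¹y/‖H⁻¹y‖ and define L(v) := (1/‖H⁻¹y‖) · (I₃ − w wᵀ) H⁻¹ v. Then the norm of the cross product of the images of the tangent frame satisfies ‖L(v₁) × L(v₂)‖ = 1/‖H⁻¹y‖³. (This is the Jacobian determinant of the sphere map ρ_H at y, since its differential is Dρ_H(y)v = (1/‖H⁻¹y‖) π_{ρ_H(y)} H⁻¹ v.) -/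
open Matrix MeasureTheory
open scoped RealInnerProductSpace

noncomputable section

/-- Euclidean 3-space. -/
abbrev E3 := EuclideanSpace ℝ (Fin 3)
/-- Real 3×3 matrices. -/
abbrev M3 := Matrix (Fin 3) (Fin 3) ℝ
/-- The special linear group SL(3,ℝ). -/
abbrev SL3 := Matrix.SpecialLinearGroup (Fin 3) ℝ

/-- Matrix-vector product as a map on Euclidean 3-space. -/
def mopv (A : M3) (x : E3) : E3 :=
  (WithLp.equiv 2 (Fin 3 → ℝ)).symm (A.mulVec (WithLp.equiv 2 (Fin 3 → ℝ) x))

/-- Outer product `u vᵀ` of two vectors of Euclidean 3-space, as a 3×3 matrix. -/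
def outer (u v : E3) : M3 :=
  Matrix.vecMulVec (WithLp.equiv 2 (Fin 3 → ℝ) u) (WithLp.equiv 2 (Fin 3 → ℝ) v)

/-- Cross product on Euclidean 3-space. -/
def cross3 (u v : E3) : E3 :=
  (WithLp.equiv 2 (Fin 3 → ℝ)).symm
    (crossProduct (WithLp.equiv 2 (Fin 3 → ℝ) u) (WithLp.equiv 2 (Fin 3 → ℝ) v))

/-! ### Auxiliary lemmas -/

lemma inner_eq_dot' (x y : E3) :
    ⟪x, y⟫ = (WithLp.equiv 2 (Fin 3 → ℝ) x) ⬝ᵥ (WithLp.equiv 2 (Fin 3 → ℝ) y) := by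
  rw [EuclideanSpace.inner_eq_star_dotProduct, dotProduct_comm]; rfl

lemma norm_sq_eq_dot' (x : E3) :
    (WithLp.equiv 2 (Fin 3 → ℝ) x) ⬝ᵥ (WithLp.equiv 2 (Fin 3 → ℝ) x) = ‖x‖ ^ 2 := by
  rw [← inner_eq_dot', real_inner_self_eq_norm_sq]

lemma sub_outer_mulVec' (w x : Fin 3 → ℝ) :
    (1 - Matrix.vecMulVec w w).mulVec x = x - (w ⬝ᵥ x) • w := by
  funext i
  fin_cases i <;>
    simp [Matrix.mulVec, Matrix.vecMulVec_apply, dotProduct, Fin.sum_univ_three,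
      Matrix.sub_apply, Matrix.one_apply] <;> ring

lemma proj_cross' (a b w : Fin 3 → ℝ) (hww : w ⬝ᵥ w = 1) :
    (a - (w ⬝ᵥ a) • w) ⨯₃ (b - (w ⬝ᵥ b) • w) = ((a ⨯₃ b) ⬝ᵥ w) • w := by
  simp only [dotProduct, Fin.sum_univ_three, cross_apply] at hww ⊢
  funext i
  fin_cases i <;> simp [cross_apply]
  · linear_combination (-(a 1 * b 2 - a 2 * b 1)) * hww
  · linear_combination (-(a 2 * b 0 - a 0 * b 2)) * hww
  · linear_combination (-(a 0 * b 1 - a 1 * b 0)) * hww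

lemma plain_key (A : M3) (hdet : A.det = 1) (y v₁ v₂ w : Fin 3 → ℝ) (n : ℝ) (hn : 0 < n)
    (hy : y ⬝ᵥ y = 1) (h11 : v₁ ⬝ᵥ v₁ = 1) (h22 : v₂ ⬝ᵥ v₂ = 1)
    (h12 : v₁ ⬝ᵥ v₂ = 0) (h1y : v₁ ⬝ᵥ y = 0) (h2y : v₂ ⬝ᵥ y = 0)
    (hA2 : (A.mulVec y) ⬝ᵥ (A.mulVec y) = n ^ 2)
    (hw : w = n⁻¹ • A.mulVec y) :
    ∃ d : ℝ, d ^ 2 = 1 ∧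
      (n⁻¹ • (A.mulVec v₁ - (w ⬝ᵥ A.mulVec v₁) • w)) ⨯₃
        (n⁻¹ • (A.mulVec v₂ - (w ⬝ᵥ A.mulVec v₂) • w)) = (n⁻¹ ^ 3 * d) • w := by
  have hn' : n ≠ 0 := ne_of_gt hn
  -- w is a unit vector
  have hww : w ⬝ᵥ w = 1 := by
    rw [hw]
    rw [smul_dotProduct, dotProduct_smul, hA2, smul_eq_mul, smul_eq_mul]
    field_simp
  set a := A.mulVec v₁ with ha
  set b := A.mulVec v₂ with hb
  -- determinant d
  set d : ℝ := Matrix.det ![y, v₁, v₂] with hd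
  refine ⟨d, ?_, ?_⟩
  · -- d ^ 2 = 1 via Gram matrix
    have hM : (Matrix.of ![y, v₁, v₂]) * (Matrix.of ![y, v₁, v₂])ᵀ = 1 := by
      simp only [dotProduct, Fin.sum_univ_three] at hy h11 h22 h12 h1y h2y
      ext i j
      simp only [Matrix.mul_apply, Matrix.transpose_apply, Matrix.of_apply, Fin.sum_univ_three]
      fin_cases i <;> fin_cases j <;> simp [Matrix.one_apply] <;> linarith
    have := congrArg Matrix.det hM
    rw [Matrix.det_mul, Matrix.det_transpose, Matrix.det_one] at this
    calc d ^ 2 = Matrix.det ![y, v₁, v₂] * Matrix.det ![y, v₁, v₂] := by rw [hd]; ring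
    _ = 1 := this
  · -- the cross product formula
    have hcross : (n⁻¹ • (a - (w ⬝ᵥ a) • w)) ⨯₃ (n⁻¹ • (b - (w ⬝ᵥ b) • w))
        = (n⁻¹ * n⁻¹) • ((a - (w ⬝ᵥ a) • w) ⨯₃ (b - (w ⬝ᵥ b) • w)) := by
      rw [_root_.map_smul crossProduct, LinearMap.smul_apply, LinearMap.map_smul, smul_smul]
    rw [hcross, proj_cross' a b w hww]
    -- compute the triple product
    have htp : (a ⨯₃ b) ⬝ᵥ (A.mulVec y) = d := by
      have hfac : (Matrix.of ![A.mulVec y, a, b]) = (Matrix.of ![y, v₁, v₂]) * Aᵀ := by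
        ext i j
        fin_cases i <;>
          simp [Matrix.mul_apply, Matrix.mulVec, dotProduct, Fin.sum_univ_three,
            Matrix.transpose_apply, ha, hb] <;> ring
      have h1 : (A.mulVec y) ⬝ᵥ (a ⨯₃ b) = Matrix.det ![A.mulVec y, a, b] :=
        triple_product_eq_det _ _ _
      have h2 : Matrix.det ![A.mulVec y, a, b] = Matrix.det ((Matrix.of ![y, v₁, v₂]) * Aᵀ) := by
        rw [← hfac]; rfl
      rw [dotProduct_comm, h1, h2, Matrix.det_mul, Matrix.det_transpose, hdet, mul_one]
      exact hd.symm
    have hwd : (a ⨯₃ b) ⬝ᵥ w = n⁻¹ * d := by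
      rw [hw, dotProduct_smul, htp, smul_eq_mul]
    rw [hwd, smul_smul]
    congr 1
    ring

lemma units_abs_one {d : ℝ} (h : d ^ 2 = 1) : |d| = 1 := by
  have h0 : (d - 1) * (d + 1) = 0 := by linear_combination h
  rcases mul_eq_zero.mp h0 with h1 | h1
  · have : d = 1 := by linarith
    rw [this]; norm_num
  · have : d = -1 := by linarith
    rw [this]; norm_num

/-- Jacobian of the sphere map `ρ_H` at `y`: with `w = H⁻¹y/‖H⁻¹y‖` and
`L(v) = (1/‖H⁻¹y‖)(I₃ − wwᵀ)H⁻¹v`, for any orthonormal tangent frame `v₁, v₂` at `y`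
one has `‖L(v₁) × L(v₂)‖ = 1/‖H⁻¹y‖³`. -/
theorem jacobian_of_sphere_warp (H : SL3) (y : E3) (hy : ‖y‖ = 1)
    (v₁ v₂ : E3) (hv₁ : ‖v₁‖ = 1) (hv₂ : ‖v₂‖ = 1) (hv₁₂ : ⟪v₁, v₂⟫ = 0)
    (hv₁y : ⟪v₁, y⟫ = 0) (hv₂y : ⟪v₂, y⟫ = 0)
    (w : E3) (hw : w = ‖mopv ↑(H⁻¹) y‖⁻¹ • mopv ↑(H⁻¹) y)
    (L : E3 → E3)
    (hL : ∀ v : E3, L v = ‖mopv ↑(H⁻¹) y‖⁻¹ • mopv (1 - outer w w) (mopv ↑(H⁻¹) v)) :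
    ‖cross3 (L v₁) (L v₂)‖ = (‖mopv ↑(H⁻¹) y‖ ^ 3)⁻¹ := by
  classical
  set A : M3 := ↑(H⁻¹) with hA
  set e := WithLp.equiv 2 (Fin 3 → ℝ) with he
  set n : ℝ := ‖mopv A y‖ with hn
  -- A has determinant 1
  have hdet : A.det = 1 := (H⁻¹).2
  -- mopv A y ≠ 0
  have hAy : mopv A y ≠ 0 := by
    intro h0
    have h1 : A.mulVec (e y) = 0 := by
      have := congrArg e h0
      simpa [mopv, he] using this
    have hHA : (↑H : M3) * A = 1 := by
      rw [hA]
      rw [← Matrix.SpecialLinearGroup.coe_mul, mul_inv_cancel]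
      rfl
    have hy0 : e y = 0 := by
      calc e y = ((↑H : M3) * A).mulVec (e y) := by rw [hHA, Matrix.one_mulVec]
      _ = (↑H : M3).mulVec (A.mulVec (e y)) := by rw [← Matrix.mulVec_mulVec]
      _ = 0 := by rw [h1, Matrix.mulVec_zero]
    have : y = 0 := e.injective (by rw [hy0]; rfl)
    rw [this, norm_zero] at hy
    norm_num at hy
  have hnpos : 0 < n := by
    rw [hn]; exact norm_pos_iff.mpr hAy
  have hnne : n ≠ 0 := ne_of_gt hnpos
  -- plain-level data
  have hA2 : (A.mulVec (e y)) ⬝ᵥ (A.mulVec (e y)) = n ^ 2 := by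
    have : A.mulVec (e y) = e (mopv A y) := by simp [mopv, he]
    rw [this, norm_sq_eq_dot', hn]
  have hyd : (e y) ⬝ᵥ (e y) = 1 := by rw [norm_sq_eq_dot', hy]; norm_num
  have h11 : (e v₁) ⬝ᵥ (e v₁) = 1 := by rw [norm_sq_eq_dot', hv₁]; norm_num
  have h22 : (e v₂) ⬝ᵥ (e v₂) = 1 := by rw [norm_sq_eq_dot', hv₂]; norm_num
  have h12 : (e v₁) ⬝ᵥ (e v₂) = 0 := by rw [← inner_eq_dot']; exact hv₁₂
  have h1y : (e v₁) ⬝ᵥ (e y) = 0 := by rw [← inner_eq_dot']; exact hv₁y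
  have h2y : (e v₂) ⬝ᵥ (e y) = 0 := by rw [← inner_eq_dot']; exact hv₂y
  have hwp : e w = n⁻¹ • A.mulVec (e y) := by
    rw [hw]
    simp [mopv, he, WithLp.ofLp_smul]
  -- L at plain level
  have hLp : ∀ v : E3, e (L v) = n⁻¹ • ((A.mulVec (e v)) - ((e w) ⬝ᵥ (A.mulVec (e v))) • (e w)) := by
    intro v
    rw [hL v]
    simp only [mopv, outer, he, WithLp.equiv_apply, WithLp.equiv_symm_apply, WithLp.ofLp_smul, WithLp.ofLp_toLp, Equiv.apply_symm_apply]
    rw [sub_outer_mulVec']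
  obtain ⟨d, hd2, hkey⟩ := plain_key A hdet (e y) (e v₁) (e v₂) (e w) n hnpos hyd h11 h22
    h12 h1y h2y hA2 hwp
  -- assemble
  have hX : cross3 (L v₁) (L v₂) = (n⁻¹ ^ 3 * d) • w := by
    have : e (cross3 (L v₁) (L v₂)) = (n⁻¹ ^ 3 * d) • (e w) := by
      simp only [cross3, he, Equiv.apply_symm_apply]
      rw [hLp v₁, hLp v₂, hkey]
    have h2 := congrArg e.symm this
    simpa [he, WithLp.toLp_smul] using h2
  have hw1 : ‖w‖ = 1 := by
    rw [hw, norm_smul, ← hn, norm_inv, Real.norm_eq_abs, abs_of_pos hnpos]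
    field_simp
  rw [hX, norm_smul, hw1, mul_one, Real.norm_eq_abs, abs_mul, units_abs_one hd2, mul_one,
    abs_pow, abs_inv, abs_of_pos hnpos]
  exact inv_pow n 3
end
end

section
/- Change of variables on the sphere under a homography warp: for every H ∈ SL(3,ℝ) and every measurable function F : S² → [0,∞] (equivalently, every σ-integrable F : S² → ℝ), one has ∫_{S²} F(H⁻¹x/‖H⁻¹x‖) dσ(x) = ∫_{S²} F(y) · ‖Hy‖⁻³ dσ(y). -/
open Matrix MeasureTheory
open scoped RealInnerProductSpace

noncomputable section

lemma mopv_mopv (A B : M3) (x : E3) : mopv A (mopv B x) = mopv (A * B) x := by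
  simp [mopv, Matrix.mulVec_mulVec]

lemma mopv_one (x : E3) : mopv 1 x = x := by simp [mopv]

lemma mopv_ne_zero (H : SL3) {x : E3} (hx : x ≠ 0) : mopv (↑H) x ≠ 0 := by
  intro h0
  apply hx
  have h1 : mopv ↑(H⁻¹) (mopv ↑H x) = x := by
    rw [mopv_mopv, ← Matrix.SpecialLinearGroup.coe_mul, inv_mul_cancel,
      Matrix.SpecialLinearGroup.coe_one, mopv_one]
  rw [h0] at h1
  simpa [mopv] using h1.symm

/-- The unit sphere S² in Euclidean 3-space. -/
abbrev S2 : Set E3 := Metric.sphere (0 : E3) 1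

lemma sphere_ne_zero {x : E3} (hx : x ∈ S2) : x ≠ 0 := by
  have h : ‖x‖ = 1 := mem_sphere_zero_iff_norm.mp hx
  intro h0; rw [h0] at h; simp at h

/-- The right action `ρ(H,x) = H⁻¹x/‖H⁻¹x‖` of SL(3,ℝ) on the unit sphere. -/
def ρS (H : SL3) (x : S2) : S2 :=
  ⟨‖mopv ↑(H⁻¹) ↑x‖⁻¹ • mopv ↑(H⁻¹) ↑x,
    mem_sphere_zero_iff_norm.mpr (norm_smul_inv_norm (mopv_ne_zero H⁻¹ (sphere_ne_zero x.2)))⟩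

/-- The standard surface measure on the unit sphere S² (total mass 4π). -/
def σ : Measure S2 := (volume : Measure E3).toSphere

open scoped ENNReal


open Set Metric

/-- `mopv` agrees with `Matrix.toEuclideanLin`. -/
lemma mopv_eq (A : M3) (x : E3) : mopv A x = Matrix.toEuclideanLin A x := rfl

lemma mopv_smul (A : M3) (r : ℝ) (x : E3) : mopv A (r • x) = r • mopv A x := by
  simp [mopv_eq, LinearMap.map_smul]

lemma continuous_mopv (A : M3) : Continuous (mopv A) := by
  have : Continuous (Matrix.toEuclideanLin A) :=
    (Matrix.toEuclideanLin A).continuous_of_finiteDimensional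
  simpa [funext fun x => mopv_eq A x] using this

lemma det_toEuclideanLin (A : M3) :
    LinearMap.det (Matrix.toEuclideanLin A : E3 →ₗ[ℝ] E3) = A.det := by
  let e : (Fin 3 → ℝ) ≃ₗ[ℝ] E3 := (WithLp.linearEquiv 2 ℝ (Fin 3 → ℝ)).symm
  have h : (Matrix.toEuclideanLin A : E3 →ₗ[ℝ] E3)
      = (e : (Fin 3 → ℝ) →ₗ[ℝ] E3) ∘ₗ (Matrix.toLin' A) ∘ₗ (e.symm : E3 →ₗ[ℝ] (Fin 3 → ℝ)) := by
    ext x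
    rfl
  rw [h, LinearMap.det_conj, LinearMap.det_toLin']

lemma measurePreserving_mopv (A : SL3) :
    MeasurePreserving (mopv (↑A : M3)) (volume : Measure E3) volume := by
  have hdet : LinearMap.det (Matrix.toEuclideanLin (↑A : M3) : E3 →ₗ[ℝ] E3) = 1 := by
    rw [det_toEuclideanLin]; exact A.2
  refine ⟨(continuous_mopv _).measurable, ?_⟩
  have := MeasureTheory.Measure.map_linearMap_addHaar_eq_smul_addHaar
    (volume : Measure E3) (f := (Matrix.toEuclideanLin (↑A : M3) : E3 →ₗ[ℝ] E3))
    (by rw [hdet]; exact one_ne_zero)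
  simp only [hdet] at this
  simpa [funext fun x => mopv_eq (↑A : M3) x] using this

/-- Polar-coordinates formula on `E3`. -/
lemma polar (g : E3 → ℝ≥0∞) (hg : Measurable g) :
    ∫⁻ x, g x ∂(volume : Measure E3)
      = ∫⁻ y : S2, ∫⁻ r : Ioi (0:ℝ), g ((r : ℝ) • (y : E3)) ∂(Measure.volumeIoiPow 2) ∂σ := by
  have hmp := (volume : Measure E3).measurePreserving_homeomorphUnitSphereProd
  have hdim : Module.finrank ℝ E3 - 1 = 2 := by
    simp [finrank_euclideanSpace_fin]
  rw [hdim] at hmp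
  set G : S2 × Ioi (0:ℝ) → ℝ≥0∞ := fun p => g ((p.2 : ℝ) • (p.1 : E3)) with hG
  have hGm : Measurable G := by
    apply hg.comp
    fun_prop
  calc ∫⁻ x, g x ∂(volume : Measure E3)
      = ∫⁻ x in ({0}ᶜ : Set E3), g x ∂volume := by
        rw [MeasureTheory.restrict_compl_singleton]
    _ = ∫⁻ x : ({0}ᶜ : Set E3), g x ∂((volume : Measure E3).comap Subtype.val) := by
        rw [lintegral_subtype_comap (measurableSet_singleton (0:E3)).compl]
    _ = ∫⁻ x : ({0}ᶜ : Set E3), G (homeomorphUnitSphereProd E3 x)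
          ∂((volume : Measure E3).comap Subtype.val) := by
        refine lintegral_congr fun x => ?_
        have hx : (x : E3) ≠ 0 := x.2
        simp only [hG, homeomorphUnitSphereProd_apply_snd_coe,
          homeomorphUnitSphereProd_apply_fst_coe]
        rw [smul_inv_smul₀ (norm_ne_zero_iff.2 hx)]
    _ = ∫⁻ p : S2 × Ioi (0:ℝ), G p
          ∂((volume : Measure E3).toSphere.prod (Measure.volumeIoiPow 2)) :=
        hmp.lintegral_comp hGm
    _ = _ := by
        rw [MeasureTheory.lintegral_prod _ hGm.aemeasurable]; rfl

/-- Unit vector in the direction of `x`. -/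
def unitV (x : E3) : E3 := ‖x‖⁻¹ • x

open Classical in
def extS (F : S2 → ℝ≥0∞) : E3 → ℝ≥0∞ :=
  fun z => if h : z ∈ S2 then F ⟨z, h⟩ else 0

open Classical in
lemma measurable_extS {F : S2 → ℝ≥0∞} (hF : Measurable F) : Measurable (extS F) := by
  have : extS F = fun z => if h : z ∈ S2 then F ⟨z, h⟩ else (fun _ : (S2ᶜ : Set E3) => (0:ℝ≥0∞)) ⟨z, h⟩ := by
    funext z; unfold extS; split <;> rfl
  rw [this]
  exact Measurable.dite hF measurable_const isClosed_sphere.measurableSet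

open Classical in
lemma extS_mem {F : S2 → ℝ≥0∞} {z : E3} (hz : z ∈ S2) : extS F z = F ⟨z, hz⟩ := by
  unfold extS; rw [dif_pos hz]

lemma measurable_unitV : Measurable unitV := by
  unfold unitV; fun_prop

lemma unitV_smul {r : ℝ} (hr : 0 < r) {w : E3} (hw : w ≠ 0) : unitV (r • w) = unitV w := by
  have hw' : ‖w‖ ≠ 0 := norm_ne_zero_iff.2 hw
  unfold unitV
  rw [norm_smul, Real.norm_eq_abs, abs_of_pos hr, smul_smul]
  congr 1
  field_simp

lemma unitV_mem {w : E3} (hw : w ≠ 0) : unitV w ∈ S2 :=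
  mem_sphere_zero_iff_norm.mpr (norm_smul_inv_norm hw)

/-- Key change-of-variables lemma. -/
lemma key (A : SL3) (F : S2 → ℝ≥0∞) (hF : Measurable F) :
    ∫⁻ y : S2, F y ∂σ
      = ∫⁻ y : S2, extS F (unitV (mopv (↑A : M3) (y : E3)))
          * ENNReal.ofReal ((‖mopv (↑A : M3) (y : E3)‖ ^ 3)⁻¹) ∂σ := by
  set g : E3 → ℝ≥0∞ := fun x => extS F (unitV x) * (Metric.ball (0:E3) 1).indicator 1 x with hgdef
  have hg : Measurable g := by
    apply Measurable.mul
    · exact (measurable_extS hF).comp measurable_unitV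
    · exact measurable_const.indicator measurableSet_ball
  have c3 : (0:ℝ) < 3 := by norm_num
  -- way 1
  have way1 : ∫⁻ x, g x ∂(volume : Measure E3)
      = (∫⁻ y : S2, F y ∂σ) * ENNReal.ofReal (3⁻¹) := by
    rw [polar g hg, ← lintegral_mul_const _ hF]
    refine lintegral_congr fun y => ?_
    have hy1 : ‖(y : E3)‖ = 1 := mem_sphere_zero_iff_norm.mp y.2
    have hy0 : (y : E3) ≠ 0 := sphere_ne_zero y.2
    have hcalc : ∀ r : Ioi (0:ℝ), g ((r : ℝ) • (y : E3))
        = (Iio (⟨1, mem_Ioi.mpr one_pos⟩ : Ioi (0:ℝ))).indicator (fun _ => F y) r := by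
      intro r
      have hr : (0:ℝ) < r := r.2
      simp only [hgdef, unitV_smul hr hy0]
      have h1 : unitV (y : E3) = (y : E3) := by
        unfold unitV; rw [hy1]; simp
      rw [h1, extS_mem y.2, Subtype.coe_eta]
      have h2 : ((r:ℝ) • (y:E3)) ∈ Metric.ball (0:E3) 1 ↔ r ∈ Iio (⟨1, mem_Ioi.mpr one_pos⟩ : Ioi (0:ℝ)) := by
        rw [mem_ball_zero_iff, norm_smul, hy1, mul_one, Real.norm_eq_abs,
          abs_of_pos r.2, Set.mem_Iio, ← Subtype.coe_lt_coe]
      by_cases hmem : r ∈ Iio (⟨1, mem_Ioi.mpr one_pos⟩ : Ioi (0:ℝ))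
      · rw [Set.indicator_of_mem hmem, Set.indicator_of_mem (h2.mpr hmem)]
        simp
      · rw [Set.indicator_of_notMem hmem, Set.indicator_of_notMem (fun h => hmem (h2.mp h))]
        simp
    rw [lintegral_congr hcalc, lintegral_indicator_const measurableSet_Iio,
      Measure.volumeIoiPow_apply_Iio]
    norm_num
  -- way 2
  have way2 : ∫⁻ x, g x ∂(volume : Measure E3)
      = (∫⁻ y : S2, extS F (unitV (mopv (↑A : M3) (y : E3)))
          * ENNReal.ofReal ((‖mopv (↑A : M3) (y : E3)‖ ^ 3)⁻¹) ∂σ) * ENNReal.ofReal (3⁻¹) := by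
    rw [← (measurePreserving_mopv A).lintegral_comp hg]
    have hcomp : Measurable fun x => g (mopv (↑A : M3) x) :=
      hg.comp (continuous_mopv _).measurable
    rw [polar _ hcomp]
    have hmeas : Measurable fun y : S2 => extS F (unitV (mopv (↑A : M3) (y : E3)))
        * ENNReal.ofReal ((‖mopv (↑A : M3) (y : E3)‖ ^ 3)⁻¹) := by
      have h1 : Measurable fun y : S2 => mopv (↑A : M3) (y : E3) :=
        (continuous_mopv _).measurable.comp measurable_subtype_coe
      exact (((measurable_extS hF).comp measurable_unitV).comp h1).mul
        (((h1.norm.pow_const 3).inv).ennreal_ofReal)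
    rw [← lintegral_mul_const _ hmeas]
    refine lintegral_congr fun y => ?_
    have hy0 : (y : E3) ≠ 0 := sphere_ne_zero y.2
    set w : E3 := mopv (↑A : M3) (y : E3) with hw
    have hw0 : w ≠ 0 := mopv_ne_zero A hy0
    have hwn : (0:ℝ) < ‖w‖ := norm_pos_iff.2 hw0
    have hcalc : ∀ r : Ioi (0:ℝ), g (mopv (↑A : M3) ((r : ℝ) • (y : E3)))
        = (Iio (⟨‖w‖⁻¹, mem_Ioi.mpr (inv_pos.2 hwn)⟩ : Ioi (0:ℝ))).indicator
            (fun _ => extS F (unitV w)) r := by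
      intro r
      have hr : (0:ℝ) < r := r.2
      rw [mopv_smul]
      simp only [hgdef, ← hw, unitV_smul hr hw0]
      have h2 : ((r:ℝ) • w) ∈ Metric.ball (0:E3) 1
          ↔ r ∈ Iio (⟨‖w‖⁻¹, mem_Ioi.mpr (inv_pos.2 hwn)⟩ : Ioi (0:ℝ)) := by
        have hiff : ‖w‖ * (r:ℝ) < 1 ↔ (r:ℝ) < ‖w‖⁻¹ := by
          rw [← mul_one ‖w‖⁻¹]
          exact (lt_inv_mul_iff₀ hwn).symm
        rw [mem_ball_zero_iff, norm_smul, Real.norm_eq_abs, abs_of_pos hr, mul_comm,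
          Set.mem_Iio, ← Subtype.coe_lt_coe]
        exact hiff
      by_cases hmem : r ∈ Iio (⟨‖w‖⁻¹, mem_Ioi.mpr (inv_pos.2 hwn)⟩ : Ioi (0:ℝ))
      · rw [Set.indicator_of_mem hmem, Set.indicator_of_mem (h2.mpr hmem)]
        simp
      · rw [Set.indicator_of_notMem hmem, Set.indicator_of_notMem (fun h => hmem (h2.mp h))]
        simp
    rw [lintegral_congr hcalc, lintegral_indicator_const measurableSet_Iio,
      Measure.volumeIoiPow_apply_Iio]
    rw [mul_assoc, ← ENNReal.ofReal_mul (by positivity)]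
    congr 2
    push_cast
    rw [inv_pow]
    ring
  have h3ne : ENNReal.ofReal (3⁻¹ : ℝ) ≠ 0 := by
    simp [ENNReal.ofReal_eq_zero]
  have h3top : ENNReal.ofReal (3⁻¹ : ℝ) ≠ ⊤ := ENNReal.ofReal_ne_top
  have hab := way1.symm.trans way2
  have := congrArg (fun t => t * (ENNReal.ofReal (3⁻¹:ℝ))⁻¹) hab
  simpa [mul_assoc, ENNReal.mul_inv_cancel h3ne h3top,
    ENNReal.inv_mul_cancel (by norm_num : (3:ℝ≥0∞) ≠ 0) (by norm_num : (3:ℝ≥0∞) ≠ ⊤)] using this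

/-- change of variables on the sphere under a homography warp:
`∫_{S²} F(H⁻¹x/‖H⁻¹x‖) dσ(x) = ∫_{S²} F(y)‖Hy‖⁻³ dσ(y)`. -/
theorem sphere_change_of_variables (H : SL3) (F : S2 → ℝ≥0∞) (hF : Measurable F) :
    ∫⁻ x : S2, F (ρS H x) ∂σ =
      ∫⁻ y : S2, F y * ENNReal.ofReal ((‖mopv ↑H ↑y‖ ^ 3)⁻¹) ∂σ := by
  set G : S2 → ℝ≥0∞ := fun y => F y * ENNReal.ofReal ((‖mopv (↑H : M3) (y : E3)‖ ^ 3)⁻¹)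
    with hGdef
  have h1 : Measurable fun y : S2 => mopv (↑H : M3) (y : E3) :=
    (continuous_mopv _).measurable.comp measurable_subtype_coe
  have hG : Measurable G := hF.mul (((h1.norm.pow_const 3).inv).ennreal_ofReal)
  have h := key H⁻¹ G hG
  refine Eq.trans (lintegral_congr fun y => ?_) h.symm
  have hy0 : (y : E3) ≠ 0 := sphere_ne_zero y.2
  set v : E3 := mopv (↑(H⁻¹) : M3) (y : E3) with hv
  have hv0 : v ≠ 0 := mopv_ne_zero H⁻¹ hy0
  have hvn : (0:ℝ) < ‖v‖ := norm_pos_iff.2 hv0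
  have hmem : unitV v ∈ S2 := unitV_mem hv0
  have hext : extS G (unitV v) = G (ρS H y) := by
    rw [extS_mem hmem]
    congr 1
  rw [hext]
  have hback : mopv (↑H : M3) ((ρS H y : S2) : E3) = ‖v‖⁻¹ • (y : E3) := by
    show mopv (↑H : M3) (‖v‖⁻¹ • v) = _
    rw [mopv_smul, hv, mopv_mopv, ← Matrix.SpecialLinearGroup.coe_mul, mul_inv_cancel,
      Matrix.SpecialLinearGroup.coe_one, mopv_one]
  have hy1 : ‖(y : E3)‖ = 1 := mem_sphere_zero_iff_norm.mp y.2
  have hnorm : ‖mopv (↑H : M3) ((ρS H y : S2) : E3)‖ = ‖v‖⁻¹ := by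
    rw [hback, norm_smul, hy1, mul_one, Real.norm_eq_abs, abs_of_pos (inv_pos.2 hvn)]
  simp only [hGdef, hnorm]
  rw [inv_pow, inv_inv, mul_assoc, ← ENNReal.ofReal_mul (by positivity),
    mul_inv_cancel₀ (by positivity : (0:ℝ) < ‖v‖ ^ 3).ne', ENNReal.ofReal_one, mul_one]
end
end

section
/- First variation of the photometric cost: let h : ℝ³∖{0} → ℝ be continuously differentiable and 0-homogeneous, let f̊ : S² → ℝ be continuous, and let Δ be any real 3×3 matrix. Then the function φ(t) := ½ ∫_{S²} ( h(exp(−tΔ)x) − f̊(x) )² dσ(x) is differentiable at t = 0 with φ′(0) = − ∫_{S²} ( h(x) − f̊(x) ) · ⟨∇h(x), Δx⟩ dσ(x), where ∇h denotes the Euclidean gradient of h. -/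
open Matrix MeasureTheory
open scoped RealInnerProductSpace

noncomputable section

attribute [local instance] Matrix.linftyOpNormedRing Matrix.linftyOpNormedAlgebra

/-- `Matrix.toEuclideanCLM` as a linear map. -/
def toCLMlin : M3 →ₗ[ℝ] (E3 →L[ℝ] E3) :=
  { toFun := fun A => Matrix.toEuclideanCLM (𝕜 := ℝ) A
    map_add' := by intros; simp
    map_smul' := by intros; simp }

lemma cont_toCLM : Continuous (fun A : M3 => Matrix.toEuclideanCLM (𝕜 := ℝ) A) :=
  toCLMlin.continuous_of_finiteDimensional

lemma exp_toCLM (A : M3) :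
    Matrix.toEuclideanCLM (𝕜 := ℝ) (NormedSpace.exp A)
      = NormedSpace.exp (Matrix.toEuclideanCLM (𝕜 := ℝ) A) :=
  NormedSpace.map_exp _ cont_toCLM A

lemma mopv_clm (A : M3) (x : E3) : mopv A x = Matrix.toEuclideanCLM (𝕜 := ℝ) A x := by
  rw [mopv]
  conv_rhs => rw [← (WithLp.equiv 2 (Fin 3 → ℝ)).symm_apply_apply x]
  rfl

lemma gradient_inner (h : E3 → ℝ) (p v : E3) :
    fderiv ℝ h p v = ⟪gradient h p, v⟫ := by
  rw [gradient]
  rw [InnerProductSpace.toDual_symm_apply]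

/-- first variation of the photometric cost. If `h` is C¹ and
0-homogeneous on ℝ³∖{0}, `f̊` is continuous on S², then
`φ(t) = ½∫(h(exp(−tΔ)x) − f̊(x))² dσ` is differentiable at `t = 0` with
`φ′(0) = −∫(h(x) − f̊(x))⟨∇h(x), Δx⟩ dσ`. -/
theorem photometric_cost_first_variation (h : E3 → ℝ)
    (hreg : ContDiffOn ℝ 1 h {(0 : E3)}ᶜ)
    (hhom : ∀ c : ℝ, 0 < c → ∀ x : E3, x ≠ 0 → h (c • x) = h x)
    (f0 : S2 → ℝ) (hf0 : Continuous f0) (Δ : M3) (φ : ℝ → ℝ)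
    (hφ : ∀ t : ℝ, φ t = (1 / 2) *
      ∫ x : S2, (h (mopv (NormedSpace.exp (-(t • Δ))) ↑x) - f0 x) ^ 2 ∂σ) :
    HasDerivAt φ (-∫ x : S2, (h ↑x - f0 x) * ⟪gradient h ↑x, mopv Δ ↑x⟫ ∂σ) 0 := by
  haveI : IsFiniteMeasure σ := by unfold σ; infer_instance
  set ΔL : E3 →L[ℝ] E3 := Matrix.toEuclideanCLM (𝕜 := ℝ) Δ with hΔL
  set T : ℝ → E3 →L[ℝ] E3 := fun t => NormedSpace.exp (t • (-ΔL)) with hTdef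
  -- transfer the matrix exponential to the CLM exponential
  have hexp : ∀ (t : ℝ) (x : E3), mopv (NormedSpace.exp (-(t • Δ))) x = T t x := by
    intro t x
    rw [mopv_clm, exp_toCLM]
    have : Matrix.toEuclideanCLM (𝕜 := ℝ) (-(t • Δ)) = t • (-ΔL) := by
      have h1 : Matrix.toEuclideanCLM (𝕜 := ℝ) (-(t • Δ)) = toCLMlin (-(t • Δ)) := rfl
      rw [h1, map_neg, _root_.map_smul]
      rw [smul_neg]; rfl
    rw [this]
  -- T t is invertible, so T t x ≠ 0 for x ≠ 0
  have hTinv : ∀ t : ℝ, NormedSpace.exp (t • ΔL) * T t = 1 := by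
    intro t
    have hcomm : Commute (t • ΔL) (t • (-ΔL)) := by
      rw [show t • -ΔL = -(t • ΔL) from smul_neg t ΔL]
      exact (Commute.refl (t • ΔL)).neg_right
    have h2 : NormedSpace.exp (t • ΔL) * NormedSpace.exp (t • (-ΔL))
        = NormedSpace.exp (t • ΔL + t • (-ΔL)) :=
      (NormedSpace.exp_add_of_commute_of_mem_ball (𝕂 := ℝ) hcomm
        ((NormedSpace.expSeries_radius_eq_top ℝ (E3 →L[ℝ] E3)).symm ▸ edist_lt_top _ _)
        ((NormedSpace.expSeries_radius_eq_top ℝ (E3 →L[ℝ] E3)).symm ▸ edist_lt_top _ _)).symm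
    have h3 : t • ΔL + t • (-ΔL) = 0 := by rw [smul_neg, add_neg_cancel]

    show NormedSpace.exp (t • ΔL) * NormedSpace.exp (t • (-ΔL)) = 1
    rw [h2, h3, NormedSpace.exp_zero]
  have hne : ∀ (t : ℝ) (x : E3), x ≠ 0 → T t x ≠ 0 := by
    intro t x hx h0
    apply hx
    calc x = (NormedSpace.exp (t • ΔL) * T t) x := by rw [hTinv t]; simp
      _ = NormedSpace.exp (t • ΔL) (T t x) := ContinuousLinearMap.mul_apply _ _ _
      _ = 0 := by rw [h0]; simp
  -- derivative of T
  have hTderiv : ∀ t : ℝ, HasDerivAt T ((-ΔL) * T t) t := fun t =>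
    _root_.hasDerivAt_exp_smul_const' (-ΔL) t
  have contT : Continuous T := continuous_iff_continuousAt.2 fun t => (hTderiv t).continuousAt
  -- differentiability of h away from 0
  have hdiffh : ∀ p : E3, p ≠ 0 → HasFDerivAt h (fderiv ℝ h p) p := by
    intro p hp
    exact ((hreg.differentiableOn one_ne_zero).differentiableAt
      (isOpen_compl_singleton.mem_nhds hp)).hasFDerivAt
  -- pointwise derivative of the integrand
  have hFderiv : ∀ (x : S2) (t : ℝ),
      HasDerivAt (fun s => (h (T s ↑x) - f0 x) ^ 2)
        (2 * (h (T t ↑x) - f0 x) * fderiv ℝ h (T t ↑x) (((-ΔL) * T t) ↑x)) t := by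
    intro x t
    have hu : HasDerivAt (fun s => T s ↑x) (((-ΔL) * T t) ↑x) t := by
      have := (hTderiv t).clm_apply (hasDerivAt_const t (↑x : E3))
      simpa using this
    have hh : HasDerivAt (fun s => h (T s ↑x))
        (fderiv ℝ h (T t ↑x) (((-ΔL) * T t) ↑x)) t :=
      (hdiffh _ (hne t ↑x (sphere_ne_zero x.2))).comp_hasDerivAt t hu
    have := (hh.sub_const (f0 x)).fun_pow 2
    simpa using this
  -- continuity of the derivative, uncurried
  have contΦ : Continuous (fun p : ℝ × S2 => T p.1 ↑p.2) :=
    (contT.comp continuous_fst).clm_apply (continuous_subtype_val.comp continuous_snd)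
  have hΦne : ∀ p : ℝ × S2, T p.1 ↑p.2 ∈ ({(0 : E3)}ᶜ : Set E3) := fun p =>
    hne p.1 ↑p.2 (sphere_ne_zero p.2.2)
  have conthΦ : Continuous (fun p : ℝ × S2 => h (T p.1 ↑p.2)) :=
    hreg.continuousOn.comp_continuous contΦ hΦne
  have contfd : ContinuousOn (fderiv ℝ h) ({(0 : E3)}ᶜ) :=
    hreg.continuousOn_fderiv_of_isOpen isOpen_compl_singleton le_rfl
  have contA : Continuous (fun p : ℝ × S2 => fderiv ℝ h (T p.1 ↑p.2)) :=
    contfd.comp_continuous contΦ hΦne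
  have contV : Continuous (fun p : ℝ × S2 => ((-ΔL) * T p.1) ↑p.2) :=
    ((continuous_const.mul contT).comp continuous_fst).clm_apply
      (continuous_subtype_val.comp continuous_snd)
  have contG : Continuous (fun p : ℝ × S2 =>
      2 * (h (T p.1 ↑p.2) - f0 p.2) * fderiv ℝ h (T p.1 ↑p.2) (((-ΔL) * T p.1) ↑p.2)) :=
    ((continuous_const.mul (conthΦ.sub (hf0.comp continuous_snd))).mul
      (contA.clm_apply contV))
  -- bound via compactness
  obtain ⟨C, hC⟩ := (isCompact_Icc (a := (-1:ℝ)) (b := 1)).prod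
    (isCompact_univ (X := S2)) |>.exists_bound_of_continuousOn contG.continuousOn
  -- continuity of F t in x
  have contF : ∀ t : ℝ, Continuous (fun x : S2 => (h (T t ↑x) - f0 x) ^ 2) := by
    intro t
    have c1 : Continuous (fun x : S2 => T t ↑x) :=
      (T t).continuous.comp continuous_subtype_val
    have c2 : Continuous (fun x : S2 => h (T t ↑x)) :=
      hreg.continuousOn.comp_continuous c1 fun x => hne t ↑x (sphere_ne_zero x.2)
    exact (c2.sub hf0).pow 2
  -- main dominated-convergence differentiation
  have main := hasDerivAt_integral_of_dominated_loc_of_deriv_le (μ := σ) (x₀ := (0:ℝ))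
    (F := fun t (x : S2) => (h (T t ↑x) - f0 x) ^ 2)
    (F' := fun t (x : S2) =>
      2 * (h (T t ↑x) - f0 x) * fderiv ℝ h (T t ↑x) (((-ΔL) * T t) ↑x))
    (bound := fun _ => C) (s := Metric.ball 0 1) (Metric.ball_mem_nhds 0 one_pos)
    (Filter.Eventually.of_forall fun t => (contF t).aestronglyMeasurable)
    ((contF 0).integrable_of_hasCompactSupport
      ((isClosed_tsupport _).isCompact))
    ((contG.comp (Continuous.prodMk_right (0:ℝ))).aestronglyMeasurable)
    (Filter.Eventually.of_forall fun x => by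
      intro t ht
      have ht' : t ∈ Set.Icc (-1:ℝ) 1 := by
        rw [Metric.mem_ball, Real.dist_eq, sub_zero] at ht
        exact Set.mem_Icc.2 ⟨by linarith [abs_lt.1 ht |>.1], le_of_lt (abs_lt.1 ht).2⟩
      exact hC (t, x) ⟨ht', Set.mem_univ _⟩)
    (integrable_const C)
    (Filter.Eventually.of_forall fun x => fun t _ => hFderiv x t)
  -- rewrite φ
  have hφ' : φ = fun t => (1/2 : ℝ) * ∫ x : S2, (h (T t ↑x) - f0 x) ^ 2 ∂σ := by
    funext t
    rw [hφ t]
    congr 1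
    exact integral_congr_ae (Filter.Eventually.of_forall fun x => by simp only [hexp])
  -- compute the value of the derivative at 0
  have hT0 : T 0 = 1 := by
    show NormedSpace.exp ((0:ℝ) • -ΔL) = 1
    have h0 : ((0:ℝ) • -ΔL) = 0 := by ext v; simp
    rw [h0, NormedSpace.exp_zero]
  have hval : (fun x : S2 =>
      2 * (h (T 0 ↑x) - f0 x) * fderiv ℝ h (T 0 ↑x) (((-ΔL) * T 0) ↑x)) =
      fun x : S2 => (-2 : ℝ) * ((h ↑x - f0 x) * ⟪gradient h ↑x, mopv Δ ↑x⟫) := by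
    funext x
    rw [hT0]
    simp only [mul_one, ContinuousLinearMap.one_apply, ContinuousLinearMap.neg_apply,
      map_neg]
    rw [gradient_inner, show ΔL (↑x : E3) = mopv Δ ↑x from (mopv_clm Δ ↑x).symm]
    ring
  have hDval : (1/2 : ℝ) * ∫ x : S2,
      2 * (h (T 0 ↑x) - f0 x) * fderiv ℝ h (T 0 ↑x) (((-ΔL) * T 0) ↑x) ∂σ =
      -∫ x : S2, (h ↑x - f0 x) * ⟪gradient h ↑x, mopv Δ ↑x⟫ ∂σ := by
    rw [hval, integral_const_mul]
    ring
  rw [hφ', ← hDval]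
  exact main.2.const_mul (1/2 : ℝ)
end
end

section
/- Non-degeneracy implies an isolated global minimum of the photometric cost (Lemma on non-degeneracy): let h : ℝ³∖{0} → ℝ be twice continuously differentiable and 0-homogeneous, and suppose that for every nonzero trace-free matrix Δ ∈ sl(3,ℝ) one has ∫_{S²} ⟨∇h(x), Δx⟩² dσ(x) > 0. Define the cost C : SL(3,ℝ) → ℝ by C(E) := ½ ∫_{S²} ( h(E⁻¹x) − h(x) )² dσ(x). Then C(I₃) = 0, C ≥ 0 everywhere, and I₃ is an isolated minimum: there exists a neighborhood U of I₃ in SL(3,ℝ) such that C(E) > 0 for every E ∈ U with E ≠ I₃. -/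
open Matrix MeasureTheory
open scoped RealInnerProductSpace

noncomputable section

/- ### Auxiliary material -/

attribute [local instance] Matrix.normedAddCommGroup Matrix.normedSpace

open Asymptotics Filter in
/-- If `f(x + tₙ vₙ) = f x` along a sequence with `tₙ → 0⁺`, `vₙ → w`, then the
derivative of `f` at `x` in direction `w` vanishes. -/
lemma key_deriv {f : E3 → ℝ} {x : E3} {f' : E3 →L[ℝ] ℝ} (hf : HasFDerivAt f f' x)
    {t : ℕ → ℝ} (ht0 : ∀ n, 0 < t n) (ht : Tendsto t atTop (nhds 0))
    {v : ℕ → E3} {w : E3} (hv : Tendsto v atTop (nhds w))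
    (hfeq : ∀ n, f (x + t n • v n) = f x) : f' w = 0 := by
  have ho := hasFDerivAt_iff_isLittleO_nhds_zero.1 hf
  have hu : Tendsto (fun n => t n • v n) atTop (nhds 0) := by
    simpa using ht.smul hv
  have h1 := ho.comp_tendsto hu
  have h2 : (fun n => -(t n * f' (v n))) =o[atTop] fun n => t n • v n := by
    simpa only [Function.comp_def, hfeq, sub_self, zero_sub, _root_.map_smul,
      smul_eq_mul] using h1
  have hO : (fun n => t n • v n) =O[atTop] fun n => t n := by
    simpa [smul_eq_mul] using (isBigO_refl t atTop).smul (hv.isBigO_one ℝ)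
  have h3 : (fun n => t n * f' (v n)) =o[atTop] fun n => t n := by
    simpa using (h2.trans_isBigO hO).neg_left
  have h4 : Tendsto (fun n => f' (v n)) atTop (nhds 0) := by
    rw [NormedAddCommGroup.tendsto_nhds_zero]
    intro ε hε
    filter_upwards [isLittleO_iff.mp h3 (half_pos hε)] with n hn
    have ht' : (0:ℝ) < |t n| := abs_pos.mpr (ne_of_gt (ht0 n))
    have hn' : |t n| * |f' (v n)| ≤ ε / 2 * |t n| := by
      simpa [Real.norm_eq_abs, abs_mul] using hn
    have h5 : |f' (v n)| ≤ ε / 2 := by nlinarith [abs_nonneg (f' (v n))]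
    calc ‖f' (v n)‖ = |f' (v n)| := Real.norm_eq_abs _
      _ ≤ ε / 2 := h5
      _ < ε := by linarith
  exact tendsto_nhds_unique ((f'.continuous.tendsto w).comp hv) h4

/-- Sum of principal 2×2 minors of a 3×3 matrix. -/
def c2 (B : M3) : ℝ := B 0 0 * B 1 1 + B 0 0 * B 2 2 + B 1 1 * B 2 2
  - B 0 1 * B 1 0 - B 0 2 * B 2 0 - B 1 2 * B 2 1

lemma det3_one_add_smul (t : ℝ) (B : M3) :
    (1 + t • B).det = 1 + t * B.trace + t ^ 2 * c2 B + t ^ 3 * B.det := by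
  simp [Matrix.det_fin_three, Matrix.trace_fin_three, Matrix.add_apply, Matrix.smul_apply,
    Matrix.one_apply, c2]
  ring

lemma mopv_add (A B : M3) (x : E3) : mopv (A + B) x = mopv A x + mopv B x := by
  simp [mopv, Matrix.add_mulVec]

lemma mopv_smulm (c : ℝ) (A : M3) (x : E3) : mopv (c • A) x = c • mopv A x := by
  simp [mopv, Matrix.smul_mulVec]

lemma mopv_cont_matrix (x : E3) : Continuous fun M : M3 => mopv M x := by
  have h1 : Continuous fun M : M3 => M.mulVec ((WithLp.equiv 2 (Fin 3 → ℝ)) x) :=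
    Continuous.matrix_mulVec continuous_id continuous_const
  exact Continuous.comp (Y := Fin 3 → ℝ) (Z := E3)
    (g := ((WithLp.equiv 2 (Fin 3 → ℝ)).symm : (Fin 3 → ℝ) → E3))
    (PiLp.continuous_toLp 2 (fun _ : Fin 3 => ℝ)) h1

lemma mopv_cont_vec (A : M3) : Continuous fun x : S2 => mopv A (↑x : E3) := by
  have h0 : Continuous fun x : S2 => ((WithLp.equiv 2 (Fin 3 → ℝ)) (↑x : E3)) :=
    Continuous.comp (Y := E3) (Z := Fin 3 → ℝ)
      (g := ((WithLp.equiv 2 (Fin 3 → ℝ)) : E3 → (Fin 3 → ℝ)))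
      (PiLp.continuous_ofLp 2 (fun _ : Fin 3 => ℝ)) continuous_subtype_val
  have h1 : Continuous fun x : S2 => A.mulVec ((WithLp.equiv 2 (Fin 3 → ℝ)) (↑x : E3)) :=
    Continuous.matrix_mulVec continuous_const h0
  exact Continuous.comp (Y := Fin 3 → ℝ) (Z := E3)
    (g := ((WithLp.equiv 2 (Fin 3 → ℝ)).symm : (Fin 3 → ℝ) → E3))
    (PiLp.continuous_toLp 2 (fun _ : Fin 3 => ℝ)) h1

instance : IsFiniteMeasure σ := by unfold σ; infer_instance
instance : IsFiniteMeasureOnCompacts σ := ⟨fun _ _ => measure_lt_top σ _⟩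

lemma integrable_of_continuous {f : S2 → ℝ} (hf : Continuous f) : Integrable f σ :=
  integrableOn_univ.mp (hf.continuousOn.integrableOn_compact isCompact_univ)

lemma cont_h_comp {h : E3 → ℝ} (hc : ContinuousOn h {(0:E3)}ᶜ) (A : SL3) :
    Continuous fun x : S2 => h (mopv (↑A) ↑x) :=
  hc.comp_continuous (mopv_cont_vec ↑A)
    (fun x => Set.mem_compl_singleton_iff.mpr (mopv_ne_zero A (sphere_ne_zero x.2)))

lemma cont_h_self {h : E3 → ℝ} (hc : ContinuousOn h {(0:E3)}ᶜ) :
    Continuous fun x : S2 => h ↑x :=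
  hc.comp_continuous continuous_subtype_val
    (fun x => Set.mem_compl_singleton_iff.mpr (sphere_ne_zero x.2))

theorem nondegenerate_isolated_minimum (h : E3 → ℝ)
    (hreg : ContDiffOn ℝ 2 h {(0 : E3)}ᶜ)
    (hhom : ∀ c : ℝ, 0 < c → ∀ x : E3, x ≠ 0 → h (c • x) = h x)
    (hnd : ∀ Δ : M3, Δ ≠ 0 → Δ.trace = 0 →
      0 < ∫ x : S2, ⟪gradient h ↑x, mopv Δ ↑x⟫ ^ 2 ∂σ)
    (C : SL3 → ℝ)
    (hC : ∀ E : SL3, C E = (1 / 2) * ∫ x : S2, (h (mopv ↑(E⁻¹) ↑x) - h ↑x) ^ 2 ∂σ) :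
    C 1 = 0 ∧ (∀ E : SL3, 0 ≤ C E) ∧
      ∃ U ∈ nhds ((1 : SL3) : M3), ∀ E : SL3, (E : M3) ∈ U → E ≠ 1 → 0 < C E := by
  have hCnonneg : ∀ E : SL3, 0 ≤ C E := by
    intro E
    rw [hC E]
    exact mul_nonneg (by norm_num) (integral_nonneg fun x => sq_nonneg _)
  refine ⟨?_, hCnonneg, ?_⟩
  · rw [hC 1]
    simp [inv_one, mopv_one]
  by_contra hcon
  push_neg at hcon
  -- extract a sequence Eₙ → 1, Eₙ ≠ 1, C Eₙ = 0
  have hseq : ∀ n : ℕ, ∃ E : SL3, (E : M3) ∈ Metric.ball ((1 : SL3) : M3) (1 / (n + 1)) ∧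
      E ≠ 1 ∧ C E = 0 := by
    intro n
    obtain ⟨E, hE1, hE2, hE3⟩ := hcon (Metric.ball ((1 : SL3) : M3) (1 / (n + 1)))
      (Metric.ball_mem_nhds _ (by positivity))
    exact ⟨E, hE1, hE2, le_antisymm hE3 (hCnonneg E)⟩
  choose E hEball hEne hCze using hseq
  have hcont := hreg.continuousOn
  -- a.e. invariance of h
  have haen : ∀ n : ℕ, ∀ᵐ x : S2 ∂σ, h (mopv (↑((E n)⁻¹)) ↑x) = h ↑x := by
    intro n
    have hgint : Integrable (fun x : S2 => (h (mopv (↑((E n)⁻¹)) ↑x) - h ↑x) ^ 2) σ :=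
      integrable_of_continuous (((cont_h_comp hcont ((E n)⁻¹)).sub (cont_h_self hcont)).pow 2)
    have hI0 : ∫ x : S2, (h (mopv (↑((E n)⁻¹)) ↑x) - h ↑x) ^ 2 ∂σ = 0 := by
      have := hCze n; rw [hC (E n)] at this; linarith
    have := (integral_eq_zero_iff_of_nonneg (fun x => sq_nonneg _) hgint).mp hI0
    filter_upwards [this] with x hx
    exact sub_eq_zero.mp ((pow_eq_zero_iff two_ne_zero).mp hx)
  have hae : ∀ᵐ x : S2 ∂σ, ∀ n : ℕ, h (mopv (↑((E n)⁻¹)) ↑x) = h ↑x := ae_all_iff.mpr haen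
  -- convergence Eₙ⁻¹ → 1
  have h1 : Filter.Tendsto (fun n => ((E n : M3))) Filter.atTop (nhds 1) := by
    have := tendsto_iff_dist_tendsto_zero.mpr (squeeze_zero
      (g := fun n : ℕ => 1 / ((n : ℝ) + 1)) (fun n => dist_nonneg)
      (fun n => (Metric.mem_ball.mp (hEball n)).le)
      tendsto_one_div_add_atTop_nhds_zero_nat)
    exact this
  have hA : Filter.Tendsto (fun n => (((E n)⁻¹ : SL3) : M3)) Filter.atTop (nhds 1) := by
    have hadj : Continuous fun M : M3 => M.adjugate := continuous_id.matrix_adjugate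
    have := (hadj.tendsto 1).comp h1
    simpa [Function.comp_def, Matrix.SpecialLinearGroup.coe_inv, Matrix.adjugate_one] using this
  set D : ℕ → M3 := fun n => (((E n)⁻¹ : SL3) : M3) - 1 with hDdef
  have hDne : ∀ n, D n ≠ 0 := by
    intro n h0
    apply hEne n
    have : (((E n)⁻¹ : SL3) : M3) = 1 := by
      have := sub_eq_zero.mp h0; simpa using this
    have h2 : ((E n)⁻¹ : SL3) = 1 := Subtype.coe_injective (by simpa using this)
    exact inv_eq_one.mp h2
  set t : ℕ → ℝ := fun n => ‖D n‖ with htdef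
  have ht0 : ∀ n, 0 < t n := fun n => norm_pos_iff.mpr (hDne n)
  have hD : Filter.Tendsto D Filter.atTop (nhds 0) := by
    have := hA.sub (tendsto_const_nhds (x := (1 : M3)))
    rw [sub_self] at this
    exact this
  have ht : Filter.Tendsto t Filter.atTop (nhds 0) := by
    simpa using hD.norm
  set B : ℕ → M3 := fun n => (t n)⁻¹ • D n with hBdef
  have hBmem : ∀ n, B n ∈ Metric.sphere (0 : M3) 1 := fun n =>
    mem_sphere_zero_iff_norm.mpr (norm_smul_inv_norm (hDne n))
  obtain ⟨Δ, hΔmem, φ, hφ, hBtend⟩ := (isCompact_sphere (0 : M3) 1).tendsto_subseq hBmem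
  have hΔne : Δ ≠ 0 := by
    intro h0
    have := mem_sphere_zero_iff_norm.mp hΔmem
    rw [h0] at this; simp at this
  have hAeq : ∀ n, (((E n)⁻¹ : SL3) : M3) = 1 + t n • B n := by
    intro n
    have hsm : t n • B n = D n := smul_inv_smul₀ (ne_of_gt (ht0 n)) (D n)
    rw [hsm]
    show (((E n)⁻¹ : SL3) : M3) = 1 + ((((E n)⁻¹ : SL3) : M3) - 1)
    rw [add_comm, sub_add_cancel]
  -- trace Δ = 0
  have htr : ∀ n, (B n).trace = -(t n * c2 (B n)) - t n ^ 2 * (B n).det := by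
    intro n
    have hdet1 : (1 + t n • B n).det = 1 := by
      rw [← hAeq n]; exact ((E n)⁻¹).2
    have hexp := det3_one_add_smul (t n) (B n)
    rw [hdet1] at hexp
    have h5 : t n * (B n).trace + t n ^ 2 * c2 (B n) + t n ^ 3 * (B n).det = 0 := by linarith
    have h6 : t n * (B n).trace = t n * (-(t n * c2 (B n)) - t n ^ 2 * (B n).det) := by
      ring_nf
      ring_nf at h5
      linarith
    exact mul_left_cancel₀ (ne_of_gt (ht0 n)) h6
  have hc2cont : Continuous fun M : M3 => c2 M := by
    have hap : ∀ i j : Fin 3, Continuous fun M : M3 => M i j := fun i j =>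
      (continuous_apply j).comp (continuous_apply i)
    unfold c2
    exact ((((((hap 0 0).mul (hap 1 1)).add ((hap 0 0).mul (hap 2 2))).add
      ((hap 1 1).mul (hap 2 2))).sub ((hap 0 1).mul (hap 1 0))).sub
      ((hap 0 2).mul (hap 2 0))).sub ((hap 1 2).mul (hap 2 1))
  have htφ : Filter.Tendsto (fun k => t (φ k)) Filter.atTop (nhds 0) :=
    ht.comp hφ.tendsto_atTop
  have htrΔ : Δ.trace = 0 := by
    have htrφ : Filter.Tendsto (fun k => (B (φ k)).trace) Filter.atTop (nhds Δ.trace) :=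
      ((continuous_id.matrix_trace).tendsto Δ).comp hBtend
    have hc2φ : Filter.Tendsto (fun k => c2 (B (φ k))) Filter.atTop (nhds (c2 Δ)) :=
      (hc2cont.tendsto Δ).comp hBtend
    have hdetφ : Filter.Tendsto (fun k => (B (φ k)).det) Filter.atTop (nhds Δ.det) :=
      ((continuous_id.matrix_det).tendsto Δ).comp hBtend
    have hlim : Filter.Tendsto (fun k => -(t (φ k) * c2 (B (φ k))) - t (φ k) ^ 2 * (B (φ k)).det)
        Filter.atTop (nhds (-(0 * c2 Δ) - 0 ^ 2 * Δ.det)) :=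
      ((htφ.mul hc2φ).neg).sub ((htφ.pow 2).mul hdetφ)
    have htrφ0 : Filter.Tendsto (fun k => (B (φ k)).trace) Filter.atTop (nhds 0) := by
      simp only [htr]
      simpa using hlim
    exact tendsto_nhds_unique htrφ htrφ0
  -- a.e. vanishing of the directional derivative
  have hz : (fun x : S2 => ⟪gradient h ↑x, mopv Δ ↑x⟫ ^ 2) =ᵐ[σ] (fun _ => 0) := by
    filter_upwards [hae] with x hx
    have hx0 : (↑x : E3) ≠ 0 := sphere_ne_zero x.2
    have hmem : {(0 : E3)}ᶜ ∈ nhds (↑x : E3) :=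
      isOpen_compl_singleton.mem_nhds (Set.mem_compl_singleton_iff.mpr hx0)
    have hdiff : HasFDerivAt h (fderiv ℝ h ↑x) ↑x :=
      ((hreg.contDiffAt hmem).differentiableAt (by norm_num)).hasFDerivAt
    have hfe : ∀ k, h ((↑x : E3) + t (φ k) • mopv (B (φ k)) ↑x) = h ↑x := by
      intro k
      have hxx := hx (φ k)
      rw [hAeq (φ k), mopv_add, mopv_one, mopv_smulm] at hxx
      exact hxx
    have hvt : Filter.Tendsto (fun k => mopv (B (φ k)) ↑x) Filter.atTop
        (nhds (mopv Δ ↑x)) := ((mopv_cont_matrix ↑x).tendsto Δ).comp hBtend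
    have hres : fderiv ℝ h ↑x (mopv Δ ↑x) = 0 :=
      key_deriv hdiff (fun k => ht0 (φ k)) htφ hvt hfe
    have hinner : ⟪gradient h ↑x, mopv Δ ↑x⟫ = fderiv ℝ h ↑x (mopv Δ ↑x) := by
      simp only [gradient]
      exact InnerProductSpace.toDual_symm_apply
    rw [hinner, hres]
    simp
  have hint0 : ∫ x : S2, ⟪gradient h ↑x, mopv Δ ↑x⟫ ^ 2 ∂σ = 0 := by
    rw [integral_congr_ae hz, integral_zero]
  exact (hnd Δ hΔne htrΔ).ne' hint0
end
end
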